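/- Let k and M be positive integers and let I ⊆ {1,...,k}. If W and W' are i.i.d. uniform on the lattice ball B_k^±(M), then P( W_i = W'_i for all i ∈ {1,...,k} \ I ) ≤ |B_{|I|}^±(M)| / |B_k^±(M)|. -/

import Mathlib

/-- Membership in the `L¹` lattice ball of radius `M` in dimension `k`
(undirected: `ℤ^k`; directed `undir = false`: `ℤ_{≥0}^k`). -/
def inBall (undir : Bool) {k : ℕ} (M : ℕ) (w : Fin k → ℤ) : Prop :=
  (∑ i, (w i).natAbs) ≤ M ∧ (undir = false → ∀ i, 0 ≤ w i)

/-- Cardinality of the `L¹` lattice ball of radius `M` in dimension `k`. -/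
noncomputable def latticeBallCard (undir : Bool) (k M : ℕ) : ℕ :=
  Nat.card {w : Fin k → ℤ // inBall undir M w}

lemma finite_ball (undir : Bool) (k M : ℕ) : Finite {w : Fin k → ℤ // inBall undir M w} := by
  apply Finite.of_injective (β := Fin k → Set.Icc (-(M:ℤ)) (M:ℤ))
    (f := fun w => fun i => ⟨w.1 i, by
      have h1 : (w.1 i).natAbs ≤ ∑ j, (w.1 j).natAbs :=
        Finset.single_le_sum (f := fun j => (w.1 j).natAbs) (fun j _ => Nat.zero_le _)
          (Finset.mem_univ i)
      have h2 := w.2.1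
      constructor <;> omega⟩)
  intro a b hab
  ext i
  have := congrFun hab i
  exact congrArg Subtype.val this

lemma ball_nonempty (undir : Bool) (k M : ℕ) : Nonempty {w : Fin k → ℤ // inBall undir M w} :=
  ⟨⟨fun _ => 0, by constructor <;> simp⟩⟩

lemma ball_pos (undir : Bool) (k M : ℕ) : 0 < latticeBallCard undir k M := by
  have := finite_ball undir k M
  have := ball_nonempty undir k M
  exact Nat.card_pos

/-- If `W, W'` are i.i.d. uniform on `B_k^±(M)`, then
`P(Wᵢ = W'ᵢ for all i ∉ I) ≤ |B_{|I|}^±(M)|/|B_k^±(M)|`. -/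
theorem statement17 :
    ∀ (undir : Bool) (k M : ℕ), 0 < k → 0 < M → ∀ I : Finset (Fin k),
      (Nat.card {p : (Fin k → ℤ) × (Fin k → ℤ) //
          inBall undir M p.1 ∧ inBall undir M p.2 ∧ ∀ i ∉ I, p.1 i = p.2 i} : ℝ) /
        ((latticeBallCard undir k M : ℝ)) ^ 2 ≤
      (latticeBallCard undir I.card M : ℝ) / (latticeBallCard undir k M : ℝ) := by
  intro undir k M hk hM I
  have finB := finite_ball undir k M
  have finI := finite_ball undir I.card M
  set e := I.orderIsoOfFin rfl with he
  -- injection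
  have key : Nat.card {p : (Fin k → ℤ) × (Fin k → ℤ) //
      inBall undir M p.1 ∧ inBall undir M p.2 ∧ ∀ i ∉ I, p.1 i = p.2 i}
      ≤ latticeBallCard undir k M * latticeBallCard undir I.card M := by
    rw [latticeBallCard, latticeBallCard, ← Nat.card_prod]
    apply Nat.card_le_card_of_injective
      (f := fun p => (⟨p.1.1, p.2.1⟩, ⟨fun j => p.1.2 ((e j : I) : Fin k), by
        constructor
        · calc ∑ j : Fin I.card, (p.1.2 ((e j : I) : Fin k)).natAbs
              = ∑ i : I, (p.1.2 (i : Fin k)).natAbs :=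
                Fintype.sum_equiv e.toEquiv _ _ (fun j => rfl)
            _ = ∑ i ∈ I, (p.1.2 i).natAbs := Finset.sum_coe_sort I (fun i => (p.1.2 i).natAbs)
            _ ≤ ∑ i, (p.1.2 i).natAbs := Finset.sum_le_sum_of_subset (Finset.subset_univ I)
            _ ≤ M := p.2.2.1.1
        · intro h j
          exact p.2.2.1.2 h _⟩))
    rintro ⟨⟨a, b⟩, ha, hb, hab⟩ ⟨⟨a', b'⟩, ha', hb', hab'⟩ h
    simp only [Prod.mk.injEq, Subtype.mk.injEq] at h ⊢
    obtain ⟨h1, h2⟩ := h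
    refine ⟨h1, ?_⟩
    funext i
    by_cases hi : i ∈ I
    · have := congrFun (congrArg Subtype.val h2) (e.symm ⟨i, hi⟩)
      simpa using this
    · calc b i = a i := (hab i hi).symm
        _ = a' i := congrFun h1 i
        _ = b' i := hab' i hi
  have hBpos : (0 : ℝ) < (latticeBallCard undir k M : ℝ) := by
    exact_mod_cast ball_pos undir k M
  rw [div_le_div_iff₀ (by positivity) hBpos]
  calc (Nat.card {p : (Fin k → ℤ) × (Fin k → ℤ) //
          inBall undir M p.1 ∧ inBall undir M p.2 ∧ ∀ i ∉ I, p.1 i = p.2 i} : ℝ)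
        * (latticeBallCard undir k M : ℝ)
      ≤ ((latticeBallCard undir k M : ℝ) * (latticeBallCard undir I.card M : ℝ))
        * (latticeBallCard undir k M : ℝ) := by
        apply mul_le_mul_of_nonneg_right _ hBpos.le
        exact_mod_cast key
    _ = (latticeBallCard undir I.card M : ℝ) * (latticeBallCard undir k M : ℝ) ^ 2 := by ring
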